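/- For every natural number n, the number of partitions of a set with n+1 elements equals the sum over k from 0 to n of binomial(n,k) times the number of partitions of a set with k elements. Equivalently, the Bell numbers B_n (with B_n = the number of equivalence relations on Fin n) satisfy B_{n+1} = \sum_{k=0}^{n} \binom{n}{k} B_k, i.e. the Bell number sequence is shifted one place left by the binomial transform. -/

import Mathlib

/-- The setoids (equivalence relations) on a finite type form a finite type. -/
instance instFiniteSetoidFin (n : ℕ) : Finite (Setoid (Fin n)) :=
  Finite.of_injective (fun s => s.r) fun a b h => by cases a; cases b; congr

noncomputable instance instFintypeSetoidFin (n : ℕ) : Fintype (Setoid (Fin n)) :=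
  Fintype.ofFinite _

section Aux

variable {α β : Type*}

instance instFiniteSetoidAux (β : Type*) [Finite β] : Finite (Setoid β) :=
  Finite.of_injective (fun s => s.r) fun a b h => by cases a; cases b; congr

noncomputable instance instFintypeSetoidAux (β : Type*) [Finite β] : Fintype (Setoid β) :=
  Fintype.ofFinite _

/-- Transport a setoid along an equivalence. -/
def setoidCongrAux (e : α ≃ β) : Setoid α ≃ Setoid β where
  toFun r := ⟨fun a b => r.r (e.symm a) (e.symm b),
    ⟨fun a => r.refl' _, fun h => r.symm' h, fun h h' => r.trans' h h'⟩⟩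
  invFun r := ⟨fun a b => r.r (e a) (e b),
    ⟨fun a => r.refl' _, fun h => r.symm' h, fun h h' => r.trans' h h'⟩⟩
  left_inv r := Setoid.ext fun a b => by
    change r.r (e.symm (e a)) (e.symm (e b)) ↔ r.r a b; simp
  right_inv r := Setoid.ext fun a b => by
    change r.r (e (e.symm a)) (e (e.symm b)) ↔ r.r a b; simp

/-- The relation on `Option α` built from a block `s` (the elements equivalent to `none`)
and a setoid on the complement of `s`. -/
def optRel (s : Finset α) (q : Setoid {x : α // x ∉ s}) :
    Option α → Option α → Prop
  | none, none => True
  | none, some y => y ∈ s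
  | some x, none => x ∈ s
  | some x, some y => (x ∈ s ∧ y ∈ s) ∨ ∃ hx : x ∉ s, ∃ hy : y ∉ s, q.r ⟨x, hx⟩ ⟨y, hy⟩

variable {s : Finset α} {q : Setoid {x : α // x ∉ s}}

lemma optRel_none_none : optRel s q none none ↔ True := Iff.rfl
lemma optRel_none_some {y : α} : optRel s q none (some y) ↔ y ∈ s := Iff.rfl
lemma optRel_some_none {x : α} : optRel s q (some x) none ↔ x ∈ s := Iff.rfl
lemma optRel_some_some {x y : α} : optRel s q (some x) (some y) ↔
    (x ∈ s ∧ y ∈ s) ∨ ∃ hx : x ∉ s, ∃ hy : y ∉ s, q.r ⟨x, hx⟩ ⟨y, hy⟩ := Iff.rfl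

lemma optRel_equiv : Equivalence (optRel s q) := by
  constructor
  · rintro (_ | x)
    · trivial
    · by_cases hx : x ∈ s
      · exact Or.inl ⟨hx, hx⟩
      · exact Or.inr ⟨hx, hx, q.refl' _⟩
  · rintro (_ | x) (_ | y) h
    · trivial
    · exact h
    · exact h
    · rcases h with ⟨hx, hy⟩ | ⟨hx, hy, h⟩
      · exact Or.inl ⟨hy, hx⟩
      · exact Or.inr ⟨hy, hx, q.symm' h⟩
  · rintro (_ | x) (_ | y) (_ | z) h h'
    · trivial
    · exact h'
    · trivial
    · rw [optRel_none_some] at h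
      rw [optRel_some_some] at h'
      rw [optRel_none_some]
      rcases h' with ⟨_, hz⟩ | ⟨hy, _, _⟩
      · exact hz
      · exact absurd h hy
    · exact h
    · exact Or.inl ⟨h, h'⟩
    · rw [optRel_some_some] at h
      rw [optRel_some_none] at h'
      rw [optRel_some_none]
      rcases h with ⟨hx, _⟩ | ⟨_, hy, _⟩
      · exact hx
      · exact absurd h' hy
    · rw [optRel_some_some] at h h' ⊢
      rcases h with ⟨hx, hy⟩ | ⟨hx, hy, h₀⟩
      · rcases h' with ⟨_, hz⟩ | ⟨hy', _, _⟩
        · exact Or.inl ⟨hx, hz⟩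
        · exact absurd hy hy'
      · rcases h' with ⟨hy', _⟩ | ⟨hy', hz, h₁⟩
        · exact absurd hy' hy
        · exact Or.inr ⟨hx, hz, q.trans' h₀ h₁⟩

lemma sigma_setoid_ext {s s' : Finset α} (q : Setoid {x : α // x ∉ s})
    (q' : Setoid {x : α // x ∉ s'}) (h : s' = s)
    (h2 : ∀ x y (hx : x ∉ s) (hy : y ∉ s) (hx' : x ∉ s') (hy' : y ∉ s'),
      q'.r ⟨x, hx'⟩ ⟨y, hy'⟩ ↔ q.r ⟨x, hx⟩ ⟨y, hy⟩) :
    (⟨s', q'⟩ : Σ t : Finset α, Setoid {x : α // x ∉ t}) = ⟨s, q⟩ := by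
  subst h
  congr 1
  refine Setoid.ext ?_
  rintro ⟨x, hx⟩ ⟨y, hy⟩
  exact h2 x y hx hy hx hy

noncomputable def optionSetoidEquiv (α : Type*) [Fintype α] [DecidableEq α] :
    Setoid (Option α) ≃ Σ s : Finset α, Setoid {x : α // x ∉ s} := by
  classical
  exact {
    toFun := fun r => ⟨Finset.univ.filter (fun x => r.r (some x) none),
      ⟨fun a b => r.r (some a.1) (some b.1),
        ⟨fun a => r.refl' _, fun h => r.symm' h, fun h h' => r.trans' h h'⟩⟩⟩
    invFun := fun p => ⟨optRel p.1 p.2, optRel_equiv⟩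
    left_inv := fun r => by
      have hmem : ∀ x : α, (x ∈ Finset.univ.filter (fun x => r.r (some x) none)) ↔
          r.r (some x) none := by intro x; simp
      apply Setoid.ext
      rintro (_ | x) (_ | y)
      · exact iff_of_true trivial (r.refl' none)
      · exact ⟨fun h => r.symm' ((hmem y).mp h), fun h => (hmem y).mpr (r.symm' h)⟩
      · exact hmem x
      · constructor
        · rintro (⟨hx, hy⟩ | ⟨_, _, h⟩)
          · exact r.trans' ((hmem x).mp hx) (r.symm' ((hmem y).mp hy))
          · exact h
        · intro h
          by_cases hx : r.r (some x) none
          · exact Or.inl ⟨(hmem x).mpr hx, (hmem y).mpr (r.trans' (r.symm' h) hx)⟩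
          · exact Or.inr ⟨fun hm => hx ((hmem x).mp hm),
              fun hm => hx (r.trans' h ((hmem y).mp hm)), h⟩
    right_inv := fun p => by
      obtain ⟨s, q⟩ := p
      refine sigma_setoid_ext _ _ ?_ ?_
      · ext x
        simp [optRel_some_none]
        exact Iff.rfl
      · intro x y hx hy hx' hy'
        show optRel s q (some x) (some y) ↔ _
        rw [optRel_some_some]
        constructor
        · rintro (⟨hxs, _⟩ | ⟨_, _, h⟩)
          · exact absurd hxs hx
          · exact h
        · intro h
          exact Or.inr ⟨hx, hy, h⟩ }

end Aux

/-- The Bell numbers `B n = Fintype.card (Setoid (Fin n))` (the number of partitions of an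
`n`-element set) satisfy `B (n+1) = ∑_{k=0}^{n} (n choose k) * B k`: the Bell number sequence
is shifted one place left by the binomial transform. -/
theorem bell_shift_left_under_binomial_transform (n : ℕ) :
    Fintype.card (Setoid (Fin (n + 1))) =
      ∑ k ∈ Finset.range (n + 1), n.choose k * Fintype.card (Setoid (Fin k)) := by
  classical
  have e1 : Setoid (Fin (n + 1)) ≃ Σ s : Finset (Fin n), Setoid {x : Fin n // x ∉ s} :=
    (setoidCongrAux finSuccEquivLast).trans (optionSetoidEquiv (Fin n))
  have hcard : ∀ s : Finset (Fin n),
      Fintype.card (Setoid {x : Fin n // x ∉ s}) = Fintype.card (Setoid (Fin (n - s.card))) := by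
    intro s
    have hc : Fintype.card {x : Fin n // x ∉ s} = n - s.card := by
      rw [Fintype.card_subtype_compl, Fintype.card_fin]
      congr 1
      simp [Fintype.card_subtype]
    exact Fintype.card_congr (setoidCongrAux ((Fintype.equivFin _).trans (finCongr hc)))
  calc Fintype.card (Setoid (Fin (n + 1)))
      = ∑ s : Finset (Fin n), Fintype.card (Setoid {x : Fin n // x ∉ s}) := by
        rw [Fintype.card_congr e1, Fintype.card_sigma]
    _ = ∑ s ∈ (Finset.univ : Finset (Fin n)).powerset,
          Fintype.card (Setoid (Fin (n - s.card))) := by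
        rw [Finset.powerset_univ]; exact Finset.sum_congr rfl fun s _ => hcard s
    _ = ∑ j ∈ Finset.range (n + 1),
          n.choose j * Fintype.card (Setoid (Fin (n - j))) := by
        rw [Finset.sum_powerset_apply_card (fun j => Fintype.card (Setoid (Fin (n - j))))]
        simp [Finset.card_univ, smul_eq_mul]
    _ = ∑ k ∈ Finset.range (n + 1), n.choose k * Fintype.card (Setoid (Fin k)) := by
        rw [← Finset.sum_range_reflect]
        refine Finset.sum_congr rfl fun j hj => ?_
        rw [Finset.mem_range] at hj
        have hj' : j ≤ n := Nat.lt_succ_iff.mp hj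
        simp only [Nat.add_sub_cancel]
        rw [Nat.choose_symm hj', Nat.sub_sub_self hj']
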